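/- Under the stated polytope hypotheses, let F be a proper face of P and let ν ∈ ℤ^n be a lattice point lying in the relative interior of F. Then there exists i ∈ {1,…,r} such that every vertex of F belongs to I_i. -/

import Mathlib

open Module Set

/-- The linear functional `x ↦ ∑ k, w k * x k` on `Fin n → ℝ`. -/
noncomputable def dotL {n : ℕ} (w : Fin n → ℝ) : (Fin n → ℝ) →ₗ[ℝ] ℝ where
  toFun x := ∑ k, w k * x k
  map_add' x y := by
    simp [mul_add, Finset.sum_add_distrib]
  map_smul' c x := by
    simp only [Pi.smul_apply, smul_eq_mul, RingHom.id_apply, Finset.mul_sum]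
    exact Finset.sum_congr rfl fun k _ => by ring

@[simp] lemma dotL_apply {n : ℕ} (w x : Fin n → ℝ) : dotL w x = ∑ k, w k * x k := rfl

/-- Kick lemma: from a relative interior point we can move a bit past it away from
any point of the set and stay in the set. -/
lemma kick {n : ℕ} {F : Set (Fin n → ℝ)} {ν v : Fin n → ℝ}
    (hν : ν ∈ intrinsicInterior ℝ F) (hv : v ∈ F) :
    ∃ ε : ℝ, 0 < ε ∧ ν + ε • (ν - v) ∈ F := by
  obtain ⟨y, hy, hyν⟩ := hν
  have hνF : ν ∈ F := by
    have := interior_subset hy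
    simpa [hyν] using this
  have hνs : ν ∈ affineSpan ℝ F := subset_affineSpan ℝ F hνF
  have hvs : v ∈ affineSpan ℝ F := subset_affineSpan ℝ F hv
  set φ : ℝ → affineSpan ℝ F := fun t =>
    ⟨AffineMap.lineMap v ν t, AffineMap.lineMap_mem t hvs hνs⟩ with hφ
  have hφcont : Continuous φ :=
    Continuous.subtype_mk AffineMap.lineMap_continuous _
  have h1 : φ 1 = y := by
    apply Subtype.ext
    simp [hφ, hyν]
  have hopen : IsOpen (φ ⁻¹' interior ((Subtype.val : affineSpan ℝ F → _) ⁻¹' F)) :=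
    isOpen_interior.preimage hφcont
  have h1mem : (1 : ℝ) ∈ φ ⁻¹' interior ((Subtype.val : affineSpan ℝ F → _) ⁻¹' F) := by
    simp only [Set.mem_preimage, h1]; exact hy
  obtain ⟨δ, hδ, hball⟩ := Metric.isOpen_iff.1 hopen 1 h1mem
  have hmem : (1 + δ/2) ∈ φ ⁻¹' interior ((Subtype.val : affineSpan ℝ F → _) ⁻¹' F) := by
    apply hball
    simp [Real.dist_eq, abs_of_nonneg, hδ.le]
    linarith
  refine ⟨δ/2, by linarith, ?_⟩
  have : (φ (1 + δ/2) : Fin n → ℝ) ∈ F := by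
    have := interior_subset (Set.mem_preimage.1 hmem)
    exact this
  have heq : (φ (1 + δ/2) : Fin n → ℝ) = ν + (δ/2) • (ν - v) := by
    simp only [hφ, AffineMap.lineMap_apply]
    simp only [vsub_eq_sub, vadd_eq_add]
    module
  rwa [heq] at this

/-- Rank of kernel of a nonzero functional on `ℝ^n` is `n - 1`. -/
lemma ker_finrank {n : ℕ} {u : (Fin n → ℝ) →ₗ[ℝ] ℝ} (hu : u ≠ 0) :
    finrank ℝ (LinearMap.ker u) = n - 1 := by
  have hsurj : Function.Surjective u := by
    obtain ⟨x, hx⟩ : ∃ x, u x ≠ 0 := by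
      by_contra h
      push_neg at h
      exact hu (LinearMap.ext fun x => by simp [h x])
    intro y
    exact ⟨(y / u x) • x, by rw [map_smul, smul_eq_mul, div_mul_cancel₀ y hx]⟩
  have h1 : finrank ℝ (LinearMap.range u) = 1 := by
    rw [LinearMap.range_eq_top.2 hsurj]
    simp
  have h2 := LinearMap.finrank_range_add_finrank_ker u
  rw [h1, Module.finrank_pi ℝ] at h2
  simp only [Fintype.card_fin] at h2
  omega

lemma vectorSpan_le_ker {n : ℕ} {u : (Fin n → ℝ) →ₗ[ℝ] ℝ} {c : ℝ} {G : Set (Fin n → ℝ)}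
    (hG : ∀ x ∈ G, u x = c) : vectorSpan ℝ G ≤ LinearMap.ker u := by
  rw [vectorSpan_def, Submodule.span_le]
  rintro w ⟨x, hx, y, hy, rfl⟩
  simp only [SetLike.mem_coe, LinearMap.mem_ker, vsub_eq_sub, map_sub]
  rw [hG x hx, hG y hy, sub_self]

/-- Enlarging step: a non-facet exposed-type face can be grown. -/
lemma enlarge_aux {n : ℕ} (A : Finset (Fin n → ℝ)) (P : Set (Fin n → ℝ))
    (hPdef : P = convexHull ℝ (A : Set (Fin n → ℝ)))
    (u : (Fin n → ℝ) →ₗ[ℝ] ℝ) (c : ℝ) (G : Set (Fin n → ℝ))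
    (hGdef : G = {x ∈ P | u x = c}) (hle : ∀ x ∈ P, u x ≤ c)
    (g₀ : Fin n → ℝ) (hg₀ : g₀ ∈ G)
    (μ : (Fin n → ℝ) →ₗ[ℝ] ℝ)
    (hμvs : ∀ w ∈ vectorSpan ℝ G, μ w = 0)
    (hμspan : μ ∉ Submodule.span ℝ {u})
    (a₀ : Fin n → ℝ) (ha₀ : a₀ ∈ A) (hgt : μ g₀ < μ a₀) :
    ∃ (u' : (Fin n → ℝ) →ₗ[ℝ] ℝ) (c' : ℝ) (G' : Set (Fin n → ℝ)),
      u' ≠ 0 ∧ G' = {x ∈ P | u' x = c'} ∧ (∀ x ∈ P, u' x ≤ c') ∧ G ⊆ G' ∧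
      finrank ℝ (vectorSpan ℝ G) < finrank ℝ (vectorSpan ℝ G') := by
  have hAP : (A : Set (Fin n → ℝ)) ⊆ P := hPdef ▸ subset_convexHull ℝ _
  set m₀ : ℝ := μ g₀ with hm₀
  have hconstG : ∀ x ∈ G, μ x = m₀ := by
    intro x hx
    have h := hμvs (x - g₀) (by
      have := vsub_mem_vectorSpan ℝ hx hg₀
      simpa [vsub_eq_sub] using this)
    have : μ x - μ g₀ = 0 := by rw [← map_sub]; exact h
    linarith
  set S : Finset (Fin n → ℝ) := A.filter (fun a => m₀ < μ a) with hS
  have hSne : S.Nonempty := ⟨a₀, Finset.mem_filter.2 ⟨ha₀, hgt⟩⟩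
  set τ : (Fin n → ℝ) → ℝ := fun a => (c - u a) / (μ a - m₀) with hτ
  have hSfacts : ∀ a ∈ S, u a < c ∧ m₀ < μ a := by
    intro a ha
    obtain ⟨haA, haμ⟩ := Finset.mem_filter.1 ha
    refine ⟨lt_of_le_of_ne (hle a (hAP haA)) ?_, haμ⟩
    intro h
    have : a ∈ G := hGdef ▸ ⟨hAP haA, h⟩
    exact absurd (hconstG a this) (by linarith)
  set t : ℝ := S.inf' hSne τ with ht
  have htpos : 0 < t := by
    rw [ht, Finset.lt_inf'_iff]
    intro a ha
    obtain ⟨h1, h2⟩ := hSfacts a ha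
    exact div_pos (by linarith) (by linarith)
  obtain ⟨astar, hastarS, hastar_eq⟩ := S.exists_mem_eq_inf' hSne τ
  set u' : (Fin n → ℝ) →ₗ[ℝ] ℝ := u + t • μ with hu'
  set c' : ℝ := c + t * m₀ with hc'
  have hu'app : ∀ x, u' x = u x + t * μ x := fun x => by simp [hu']
  have hkey : ∀ a ∈ (A : Set (Fin n → ℝ)), u' a ≤ c' := by
    intro a haA
    rw [hu'app, hc']
    rcases le_or_gt (μ a) m₀ with h | h
    · have := hle a (hAP haA)
      nlinarith
    · have haS : a ∈ S := Finset.mem_filter.2 ⟨by exact_mod_cast haA, h⟩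
      have htle : t ≤ τ a := Finset.inf'_le τ haS
      rw [hτ] at htle
      have := (le_div_iff₀ (by linarith : (0:ℝ) < μ a - m₀)).1 htle
      nlinarith
  have hP' : ∀ x ∈ P, u' x ≤ c' := by
    intro x hx
    rw [hPdef] at hx
    exact convexHull_min hkey (convex_halfSpace_le u'.isLinear c') hx
  have hstar : u' astar = c' := by
    obtain ⟨h1, h2⟩ := hSfacts astar hastarS
    have h4 : t = (c - u astar) / (μ astar - m₀) := hastar_eq
    have h3 : t * (μ astar - m₀) = c - u astar := by
      rw [h4, div_mul_cancel₀ _ (by linarith : μ astar - m₀ ≠ 0)]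
    rw [hu'app, hc']
    linear_combination h3
  refine ⟨u', c', {x ∈ P | u' x = c'}, ?_, rfl, hP', ?_, ?_⟩
  · intro h
    apply hμspan
    have : t • μ = -u := by
      have := h
      rw [hu'] at this
      have h2 : u + t • μ = 0 := this
      linear_combination (norm := module) h2
    rw [Submodule.mem_span_singleton]
    exact ⟨-t⁻¹, by
      have : μ = t⁻¹ • (-u) := by
        rw [← this, smul_smul, inv_mul_cancel₀ (ne_of_gt htpos), one_smul]
      rw [this]; module⟩
  · intro x hx
    obtain ⟨hxP, hxc⟩ := hGdef ▸ hx
    exact ⟨hxP, by rw [hu'app, hconstG x hx, hxc]⟩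
  · have hstarG' : astar ∈ {x ∈ P | u' x = c'} :=
      ⟨hAP (Finset.mem_of_mem_filter astar hastarS), hstar⟩
    have hg₀G' : g₀ ∈ {x ∈ P | u' x = c'} := by
      obtain ⟨hxP, hxc⟩ := hGdef ▸ hg₀
      exact ⟨hxP, by rw [hu'app, hxc]⟩
    have hd : astar - g₀ ∈ vectorSpan ℝ {x ∈ P | u' x = c'} := by
      have := vsub_mem_vectorSpan ℝ hstarG' hg₀G'
      simpa [vsub_eq_sub] using this
    have hdnot : astar - g₀ ∉ vectorSpan ℝ G := by
      intro h
      have := hμvs _ h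
      obtain ⟨_, h2⟩ := hSfacts astar hastarS
      rw [map_sub] at this
      rw [hm₀] at h2
      linarith
    have hmono : vectorSpan ℝ G ≤ vectorSpan ℝ {x ∈ P | u' x = c'} := by
      apply vectorSpan_mono
      intro x hx
      obtain ⟨hxP, hxc⟩ := hGdef ▸ hx
      exact ⟨hxP, by rw [hu'app, hconstG x hx, hxc]⟩
    have hlt : vectorSpan ℝ G < vectorSpan ℝ {x ∈ P | u' x = c'} :=
      lt_of_le_of_ne hmono (fun h => hdnot (h ▸ hd))
    exact Submodule.finrank_lt_finrank_of_lt hlt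

/-- From a "good" description, the set is an exposed face of `P`. -/
lemma good_isExposed {n : ℕ} (P : Set (Fin n → ℝ))
    (u : (Fin n → ℝ) →ₗ[ℝ] ℝ) (c : ℝ) (G : Set (Fin n → ℝ))
    (hGdef : G = {x ∈ P | u x = c}) (hle : ∀ x ∈ P, u x ≤ c)
    (g₀ : Fin n → ℝ) (hg₀ : g₀ ∈ G) :
    IsExposed ℝ P G := by
  intro _
  refine ⟨LinearMap.toContinuousLinearMap u, ?_⟩
  have hg₀' := hGdef ▸ hg₀
  obtain ⟨hg₀P, hg₀c⟩ := hg₀'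
  rw [hGdef]
  ext x
  simp only [Set.mem_setOf_eq, LinearMap.coe_toContinuousLinearMap']
  constructor
  · rintro ⟨hxP, hxc⟩
    exact ⟨hxP, fun y hy => (hle y hy).trans (le_of_eq hxc.symm)⟩
  · rintro ⟨hxP, hx⟩
    refine ⟨hxP, le_antisymm (hle x hxP) ?_⟩
    rw [← hg₀c]
    exact hx g₀ hg₀P

lemma grow {n : ℕ} (hn : 1 ≤ n) (A : Finset (Fin n → ℝ)) (P : Set (Fin n → ℝ))
    (hPdef : P = convexHull ℝ (A : Set (Fin n → ℝ)))
    (h0 : (0 : Fin n → ℝ) ∈ interior P)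
    (F : Set (Fin n → ℝ)) :
    ∀ (k : ℕ) (u : (Fin n → ℝ) →ₗ[ℝ] ℝ) (c : ℝ) (G : Set (Fin n → ℝ)),
      u ≠ 0 → G = {x ∈ P | u x = c} → (∀ x ∈ P, u x ≤ c) → F ⊆ G → F.Nonempty →
      n - 1 ≤ finrank ℝ (vectorSpan ℝ G) + k →
      ∃ G', IsExposed ℝ P G' ∧ finrank ℝ (vectorSpan ℝ G') = n - 1 ∧ F ⊆ G' := by
  intro k
  induction k with
  | zero =>
    intro u c G hu hGdef hle hFG hFne hk
    obtain ⟨g₀, hg₀⟩ := hFne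
    have hub : finrank ℝ (vectorSpan ℝ G) ≤ n - 1 := by
      have h1 : vectorSpan ℝ G ≤ LinearMap.ker u :=
        vectorSpan_le_ker (fun x hx => (hGdef ▸ hx).2)
      have := Submodule.finrank_mono h1
      rw [ker_finrank hu] at this
      exact this
    exact ⟨G, good_isExposed P u c G hGdef hle g₀ (hFG hg₀), by omega, hFG⟩
  | succ k ih =>
    intro u c G hu hGdef hle hFG hFne hk
    obtain ⟨g₀, hg₀F⟩ := hFne
    have hg₀ : g₀ ∈ G := hFG hg₀F
    have hker : vectorSpan ℝ G ≤ LinearMap.ker u :=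
      vectorSpan_le_ker (fun x hx => (hGdef ▸ hx).2)
    have hub : finrank ℝ (vectorSpan ℝ G) ≤ n - 1 := by
      have := Submodule.finrank_mono hker
      rw [ker_finrank hu] at this
      exact this
    rcases eq_or_lt_of_le hub with heq | hlt
    · exact ⟨G, good_isExposed P u c G hGdef hle g₀ hg₀, heq, hFG⟩
    -- dimension < n - 1 : enlarge
    · set W := (vectorSpan ℝ G).dualAnnihilator with hW
      have hWrank : finrank ℝ W = n - finrank ℝ (vectorSpan ℝ G) := by
        have h1 : finrank ℝ ((Fin n → ℝ) ⧸ vectorSpan ℝ G)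
            = finrank ℝ ((vectorSpan ℝ G).dualAnnihilator) :=
          LinearEquiv.finrank_eq (Subspace.quotEquivAnnihilator (vectorSpan ℝ G))
        have h2 := Submodule.finrank_quotient_add_finrank (vectorSpan ℝ G)
        rw [Module.finrank_pi ℝ, Fintype.card_fin] at h2
        rw [hW]
        omega
      have hWge2 : 2 ≤ finrank ℝ W := by omega
      have huW : u ∈ W := by
        rw [hW, Submodule.mem_dualAnnihilator]
        intro w hw
        exact hker hw
      have hnotle : ¬ (W ≤ Submodule.span ℝ {u}) := by
        intro h
        have := Submodule.finrank_mono h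
        rw [finrank_span_singleton hu] at this
        omega
      obtain ⟨μ, hμW, hμspan⟩ := SetLike.not_le_iff_exists.1 hnotle
      clear hnotle
      have hμvs : ∀ w ∈ vectorSpan ℝ G, μ w = 0 := (Submodule.mem_dualAnnihilator μ).1 hμW
      have hμ0 : μ ≠ 0 := fun h => hμspan (h ▸ Submodule.zero_mem _)
      -- μ is non-constant on A
      have hnonconst : ∃ a ∈ A, μ a ≠ μ g₀ := by
        by_contra h
        push_neg at h
        have hconstP : ∀ x ∈ P, μ x = μ g₀ := by
          intro x hx
          rw [hPdef] at hx
          exact convexHull_min (fun a ha => h a ha) (convex_hyperplane μ.isLinear (μ g₀)) hx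
        have h0P : (0 : Fin n → ℝ) ∈ P := interior_subset h0
        have hg0 : μ g₀ = 0 := by
          have := hconstP 0 h0P
          simpa using this.symm
        apply hμ0
        refine LinearMap.ext fun y => ?_
        rcases eq_or_ne y 0 with rfl | hy
        · simp
        obtain ⟨δ, hδpos, hball⟩ := Metric.mem_nhds_iff.1 (mem_interior_iff_mem_nhds.1 h0)
        have hynorm : 0 < ‖y‖ := norm_pos_iff.2 hy
        set s : ℝ := δ / (2 * ‖y‖) with hs
        have hspos : 0 < s := by positivity
        have hval : s * ‖y‖ = δ / 2 := by
          rw [hs]; field_simp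
        have hsy : s • y ∈ P := by
          apply hball
          simp only [Metric.mem_ball, dist_zero_right, norm_smul, Real.norm_eq_abs,
            abs_of_pos hspos]
          rw [hval]
          linarith
        have := hconstP (s • y) hsy
        rw [map_smul, hg0] at this
        simp only [smul_eq_mul, LinearMap.zero_apply]
        have := mul_eq_zero.1 this
        rcases this with h' | h'
        · exact absurd h' (ne_of_gt hspos)
        · exact h'
      obtain ⟨a₀, ha₀A, ha₀⟩ := hnonconst
      rcases lt_or_gt_of_ne ha₀ with hlt' | hgt'
      · -- use -μ
        have hnμvs : ∀ w ∈ vectorSpan ℝ G, (-μ) w = 0 := by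
          intro w hw; simp [hμvs w hw]
        have hnμspan : (-μ) ∉ Submodule.span ℝ {u} := by
          intro h
          exact hμspan (by simpa using Submodule.neg_mem _ h)
        obtain ⟨u', c', G', hu', hG'def, hle', hGG', hrk⟩ :=
          enlarge_aux A P hPdef u c G hGdef hle g₀ hg₀ (-μ) hnμvs hnμspan a₀ ha₀A
            (by simpa using neg_lt_neg hlt')
        exact ih u' c' G' hu' hG'def hle' (hFG.trans hGG') ⟨g₀, hg₀F⟩ (by omega)
      · obtain ⟨u', c', G', hu', hG'def, hle', hGG', hrk⟩ :=
          enlarge_aux A P hPdef u c G hGdef hle g₀ hg₀ μ hμvs hμspan a₀ ha₀A hgt'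
        exact ih u' c' G' hu' hG'def hle' (hFG.trans hGG') ⟨g₀, hg₀F⟩ (by omega)

/-- Every proper nonempty exposed face of the polytope is contained in a facet. -/
lemma exists_facet {n : ℕ} (hn : 1 ≤ n) (A : Finset (Fin n → ℝ)) (P : Set (Fin n → ℝ))
    (hPdef : P = convexHull ℝ (A : Set (Fin n → ℝ)))
    (h0 : (0 : Fin n → ℝ) ∈ interior P)
    (F : Set (Fin n → ℝ)) (hF : IsExposed ℝ P F) (hFproper : F ≠ P)
    (hFne : F.Nonempty) :
    ∃ G, IsExposed ℝ P G ∧ finrank ℝ (vectorSpan ℝ G) = n - 1 ∧ F ⊆ G := by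
  obtain ⟨l, hl⟩ := hF hFne
  obtain ⟨p₀, hp₀⟩ := hFne
  have hp₀F := hp₀
  rw [hl] at hp₀
  obtain ⟨hp₀P, hp₀max⟩ := hp₀
  have hGdef : F = {x ∈ P | l.toLinearMap x = l p₀} := by
    rw [hl]
    ext x
    simp only [Set.mem_setOf_eq, ContinuousLinearMap.coe_coe]
    constructor
    · rintro ⟨hxP, hx⟩
      exact ⟨hxP, le_antisymm (hp₀max x hxP) (hx p₀ hp₀P)⟩
    · rintro ⟨hxP, hx⟩
      exact ⟨hxP, fun y hy => (hp₀max y hy).trans (le_of_eq hx.symm)⟩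
  have hle : ∀ x ∈ P, l.toLinearMap x ≤ l p₀ := fun x hx => hp₀max x hx
  have hu : (l.toLinearMap : (Fin n → ℝ) →ₗ[ℝ] ℝ) ≠ 0 := by
    intro h
    apply hFproper
    rw [hl]
    ext x
    have hlz : ∀ y, l y = 0 := fun y => by
      have : l.toLinearMap y = 0 := by rw [h]; rfl
      simpa using this
    simp [hlz]
  exact grow hn A P hPdef h0 F (n - 1) l.toLinearMap (l p₀) F hu hGdef hle
    (subset_refl F) ⟨p₀, hp₀F⟩ (by omega)



/-- A point of `ℝ^n` with integer coordinates. -/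
def IsLatticePoint {n : ℕ} (x : Fin n → ℝ) : Prop := ∀ k, ∃ z : ℤ, x k = (z : ℝ)

/-- if `P` is a reflexive polytope whose vertex set is partitioned by a
nef-partition `I_1 ⊔ ⋯ ⊔ I_r` (with Cartier data on every facet), `F` is a proper
(exposed) face of `P` and `ν` is a lattice point in the relative interior of `F`,
then all the vertices of `F` lie in a single `I i`. -/
theorem stmt1 (n r : ℕ) (hn : 1 ≤ n) (hr : 1 ≤ r)
    (A : Finset (Fin n → ℝ))
    (P : Set (Fin n → ℝ)) (hPdef : P = convexHull ℝ (A : Set (Fin n → ℝ)))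
    (h0 : (0 : Fin n → ℝ) ∈ interior P)
    (hvertLat : ∀ v ∈ Set.extremePoints ℝ P, IsLatticePoint v)
    (I : Fin r → Set (Fin n → ℝ))
    (hIdisj : ∀ i j : Fin r, i ≠ j → Disjoint (I i) (I j))
    (hIunion : (⋃ i, I i) = Set.extremePoints ℝ P)
    -- (i) reflexivity: every facet lies on an integral hyperplane at level -1
    (hreflexive : ∀ F : Set (Fin n → ℝ), IsExposed ℝ P F →
      Module.finrank ℝ (vectorSpan ℝ F) = n - 1 →
      ∃ m : Fin n → ℤ, ∀ x ∈ F, ∑ k, (m k : ℝ) * x k = -1)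
    -- (ii) Cartier data of the nef-partition on every facet
    (hcartier : ∀ F : Set (Fin n → ℝ), IsExposed ℝ P F →
      Module.finrank ℝ (vectorSpan ℝ F) = n - 1 → ∀ i : Fin r,
      ∃ m : Fin n → ℤ, ∀ v ∈ Set.extremePoints ℝ F,
        (v ∈ I i → ∑ k, (m k : ℝ) * v k = -1) ∧ (v ∉ I i → ∑ k, (m k : ℝ) * v k = 0))
    (F : Set (Fin n → ℝ)) (hF : IsExposed ℝ P F) (hFproper : F ≠ P)
    (ν : Fin n → ℝ) (hνlat : IsLatticePoint ν) (hνF : ν ∈ intrinsicInterior ℝ F) :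
    ∃ i : Fin r, Set.extremePoints ℝ F ⊆ I i := by
  classical
  have hνFmem : ν ∈ F := intrinsicInterior_subset hνF
  have hPconv : Convex ℝ P := hPdef ▸ convex_convexHull ℝ _
  have hPcomp : IsCompact P := hPdef ▸ A.finite_toSet.isCompact_convexHull ℝ
  obtain ⟨G, hGexp, hGrank, hFG⟩ := exists_facet hn A P hPdef h0 F hF hFproper ⟨ν, hνFmem⟩
  have hGP : G ⊆ P := hGexp.subset
  have hGconv : Convex ℝ G := hGexp.convex hPconv
  have hGcomp : IsCompact G := hGexp.isCompact hPcomp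
  have hKM : closure (convexHull ℝ (Set.extremePoints ℝ G)) = G :=
    closure_convexHull_extremePoints hGcomp hGconv
  have hGsub : ∀ S : Set (Fin n → ℝ), Convex ℝ S → IsClosed S →
      Set.extremePoints ℝ G ⊆ S → G ⊆ S := by
    intro S hconv hclosed hsub
    rw [← hKM]
    exact closure_minimal (convexHull_min hsub hconv) hclosed
  have hEPG : Set.extremePoints ℝ G ⊆ Set.extremePoints ℝ P :=
    hGexp.isExtreme.extremePoints_subset_extremePoints
  have hEPF : Set.extremePoints ℝ F ⊆ Set.extremePoints ℝ G := by
    intro v hv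
    have hvP : v ∈ Set.extremePoints ℝ P :=
      hF.isExtreme.extremePoints_subset_extremePoints hv
    exact inter_extremePoints_subset_extremePoints_of_subset hGP ⟨hFG hv.1, hvP⟩
  obtain ⟨mG, hmG⟩ := hreflexive G hGexp hGrank
  choose M hM using hcartier G hGexp hGrank
  set f : Fin r → ((Fin n → ℝ) →ₗ[ℝ] ℝ) :=
    fun i => dotL (fun k => (M i k : ℝ)) with hf
  have hfI : ∀ i, ∀ v ∈ Set.extremePoints ℝ G, v ∈ I i → f i v = -1 :=
    fun i v hv hvI => (hM i v hv).1 hvI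
  have hfNI : ∀ i, ∀ v ∈ Set.extremePoints ℝ G, v ∉ I i → f i v = 0 :=
    fun i v hv hvI => (hM i v hv).2 hvI
  -- the sum of the Cartier functionals is -1 on G
  set T : (Fin n → ℝ) →ₗ[ℝ] ℝ :=
    (∑ i : Fin r, f i) - dotL (fun k => (mG k : ℝ)) with hT
  have hTapp : ∀ x, T x = (∑ i, f i x) - ∑ k, (mG k : ℝ) * x k := by
    intro x
    simp [hT, LinearMap.sum_apply]
  have hsumG : ∀ x ∈ G, ∑ i, f i x = -1 := by
    have hsubT : G ⊆ {x | T x = 0} := by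
      apply hGsub _ (convex_hyperplane T.isLinear 0)
        (isClosed_eq T.continuous_of_finiteDimensional continuous_const)
      intro v hv
      have hvG : v ∈ G := extremePoints_subset hv
      obtain ⟨i₀, hi₀⟩ : ∃ i₀, v ∈ I i₀ := by
        have : v ∈ ⋃ i, I i := hIunion ▸ hEPG hv
        exact Set.mem_iUnion.1 this
      have hsv : ∑ i, f i v = -1 := by
        rw [Finset.sum_eq_single i₀]
        · exact hfI i₀ v hv hi₀
        · intro j _ hj
          exact hfNI j v hv (fun hvj => Set.disjoint_left.mp (hIdisj j i₀ hj) hvj hi₀)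
        · exact fun h => absurd (Finset.mem_univ i₀) h
      show T v = 0
      rw [hTapp, hsv, hmG v hvG]
      ring
    intro x hx
    have := hsubT hx
    have hTx : T x = 0 := this
    rw [hTapp] at hTx
    rw [hmG x hx] at hTx
    linarith
  -- bounds on G
  have hbound : ∀ i, ∀ x ∈ G, -1 ≤ f i x ∧ f i x ≤ 0 := by
    intro i
    have hsub : G ⊆ {x | -1 ≤ f i x} ∩ {x | f i x ≤ 0} := by
      apply hGsub _
        (Convex.inter (convex_halfSpace_ge (f i).isLinear (-1))
          (convex_halfSpace_le (f i).isLinear 0))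
        (IsClosed.inter (isClosed_le continuous_const (f i).continuous_of_finiteDimensional)
          (isClosed_le (f i).continuous_of_finiteDimensional continuous_const))
      intro v hv
      by_cases hvI : v ∈ I i
      · have := hfI i v hv hvI
        constructor <;> simp [this]
      · have := hfNI i v hv hvI
        constructor <;> simp [this]
    exact fun x hx => ⟨(hsub hx).1, (hsub hx).2⟩
  have hνG : ν ∈ G := hFG hνFmem
  -- integrality of the values at ν
  choose z hz using hνlat
  have hint : ∀ i, ∃ w : ℤ, f i ν = (w : ℝ) := by
    intro i
    refine ⟨∑ k, M i k * z k, ?_⟩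
    show ∑ k, (M i k : ℝ) * ν k = _
    push_cast
    exact Finset.sum_congr rfl fun k _ => by rw [hz k]
  have hvals : ∀ i, f i ν = -1 ∨ f i ν = 0 := by
    intro i
    obtain ⟨w, hw⟩ := hint i
    obtain ⟨hb1, hb2⟩ := hbound i ν hνG
    rw [hw] at hb1 hb2 ⊢
    have h1 : (-1 : ℤ) ≤ w := by exact_mod_cast hb1
    have h2 : w ≤ 0 := by exact_mod_cast hb2
    interval_cases w
    · left; norm_num
    · right; norm_num
  have hex : ∃ i₀, f i₀ ν = -1 := by
    by_contra h
    push_neg at h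
    have hall : ∀ i ∈ Finset.univ, f i ν = 0 := fun i _ =>
      (hvals i).resolve_left (h i)
    have := hsumG ν hνG
    rw [Finset.sum_congr rfl hall, Finset.sum_const_zero] at this
    norm_num at this
  obtain ⟨i₀, hi₀⟩ := hex
  refine ⟨i₀, fun v hv => ?_⟩
  by_contra hvnot
  have hv0 : f i₀ v = 0 := hfNI i₀ v (hEPF hv) hvnot
  obtain ⟨ε, hε, hx⟩ := kick hνF hv.1
  have hxG : ν + ε • (ν - v) ∈ G := hFG hx
  have hb := (hbound i₀ _ hxG).1
  have hcalc : f i₀ (ν + ε • (ν - v)) = f i₀ ν + ε * (f i₀ ν - f i₀ v) := by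
    rw [map_add, map_smul, map_sub]
    simp only [smul_eq_mul]
    try ring
  rw [hcalc, hi₀, hv0] at hb
  linarith
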